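/- Lemma 2 (averaged Han-type inequality): Let L be a positive integer, let A_1,…,A_L be mutually independent discrete random variables on a finite probability space, and let V be a discrete random variable on the same space, arbitrarily correlated with A_1,…,A_L. For a subset S ⊆ {1,…,L} write A_S for the tuple (A_s : s ∈ S). Then for every l ∈ {1,…,L}: (1/binom(L,l))·∑_{S ⊆ {1,…,L}, |S| = l} I(A_S ; V) ≤ (l/L)·I(A_1,…,A_L ; V). -/

import Mathlib

/-- Probability that the discrete random variable `X` (on finite space `Ω` with
probability mass function `p`) takes the value `x`. -/
noncomputable def pr {Ω : Type*} [Fintype Ω] {α : Type*} [DecidableEq α]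
    (p : Ω → ℝ) (X : Ω → α) (x : α) : ℝ :=
  ∑ ω ∈ Finset.univ.filter (fun ω => X ω = x), p ω

/-- Shannon entropy (base 2) of the discrete random variable `X`. -/
noncomputable def ent {Ω : Type*} [Fintype Ω] {α : Type*} [DecidableEq α]
    (p : Ω → ℝ) (X : Ω → α) : ℝ :=
  -∑ x ∈ Finset.univ.image X, pr p X x * Real.logb 2 (pr p X x)

/-- Mutual information `I(X;Y) = H(X) + H(Y) − H(X,Y)` (base 2). -/
noncomputable def mi {Ω : Type*} [Fintype Ω] {α β : Type*}
    [DecidableEq α] [DecidableEq β]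
    (p : Ω → ℝ) (X : Ω → α) (Y : Ω → β) : ℝ :=
  ent p X + ent p Y - ent p (fun ω => (X ω, Y ω))

open Finset Real

section Base
variable {Ω : Type*} [Fintype Ω] {α β γ : Type*} [DecidableEq α] [DecidableEq β] [DecidableEq γ]
variable {p : Ω → ℝ}

lemma pr_nonneg (hp0 : ∀ ω, 0 ≤ p ω) (X : Ω → α) (x : α) : 0 ≤ pr p X x :=
  Finset.sum_nonneg fun ω _ => hp0 ω

lemma le_pr (hp0 : ∀ ω, 0 ≤ p ω) (X : Ω → α) (ω : Ω) : p ω ≤ pr p X (X ω) :=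
  Finset.single_le_sum (fun ω _ => hp0 ω) (by simp)

lemma pr_le_one (hp0 : ∀ ω, 0 ≤ p ω) (hp1 : ∑ ω : Ω, p ω = 1) (X : Ω → α) (x : α) :
    pr p X x ≤ 1 := by
  rw [← hp1]
  exact Finset.sum_le_sum_of_subset_of_nonneg (Finset.subset_univ _) (fun ω _ _ => hp0 ω)

/-- If the fiber of `X` at `ω` is contained in the fiber of `Y` at `ω`. -/
lemma pr_fiber_le (hp0 : ∀ ω, 0 ≤ p ω) {X : Ω → α} {Y : Ω → β} (ω : Ω)
    (h : ∀ ω', X ω' = X ω → Y ω' = Y ω) : pr p X (X ω) ≤ pr p Y (Y ω) := by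
  apply Finset.sum_le_sum_of_subset_of_nonneg
  · intro ω' hω'
    simp only [Finset.mem_filter, Finset.mem_univ, true_and] at *
    exact h ω' hω'
  · exact fun ω _ _ => hp0 ω

lemma pr_fiber_eq {X : Ω → α} {Y : Ω → β} (ω : Ω)
    (h : ∀ ω', X ω' = X ω ↔ Y ω' = Y ω) : pr p X (X ω) = pr p Y (Y ω) := by
  unfold pr
  apply Finset.sum_congr _ (fun _ _ => rfl)
  ext ω'
  simp [h ω']

lemma sum_pr_mul (X : Ω → α) (F : α → ℝ) :
    ∑ x ∈ Finset.univ.image X, pr p X x * F x = ∑ ω : Ω, p ω * F (X ω) := by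
  apply Finset.sum_image'
  intro c _
  rw [pr, Finset.sum_mul]
  apply Finset.sum_congr rfl
  intro ω hω
  simp only [Finset.mem_filter] at hω
  rw [hω.2]

lemma ent_eq_sum (X : Ω → α) :
    ent p X = -∑ ω : Ω, p ω * Real.logb 2 (pr p X (X ω)) := by
  rw [ent, neg_inj]
  exact sum_pr_mul X (fun x => Real.logb 2 (pr p X x))

lemma sum_pr (X : Ω → α) : ∑ x ∈ Finset.univ.image X, pr p X x = ∑ ω : Ω, p ω := by
  have := sum_pr_mul (p := p) X (fun _ => (1:ℝ))
  simpa using this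

lemma ent_congr {X : Ω → α} {Y : Ω → β}
    (h : ∀ ω ω', X ω' = X ω ↔ Y ω' = Y ω) : ent p X = ent p Y := by
  rw [ent_eq_sum, ent_eq_sum, neg_inj]
  apply Finset.sum_congr rfl
  intro ω _
  rw [pr_fiber_eq ω (h ω)]

/-- "Data processing": if `X` determines `Y` (fiberwise), `ent Y ≤ ent X`. -/
lemma ent_mono (hp0 : ∀ ω, 0 ≤ p ω) {X : Ω → α} {Y : Ω → β}
    (h : ∀ ω ω', X ω' = X ω → Y ω' = Y ω) : ent p Y ≤ ent p X := by
  rw [ent_eq_sum, ent_eq_sum, neg_le_neg_iff]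
  apply Finset.sum_le_sum
  intro ω _
  rcases eq_or_lt_of_le (hp0 ω) with h0 | h0
  · simp [← h0]
  · apply mul_le_mul_of_nonneg_left _ (le_of_lt h0)
    exact Real.logb_le_logb_of_le one_lt_two (lt_of_lt_of_le h0 (le_pr hp0 X ω))
      (pr_fiber_le hp0 ω (h ω))

lemma ent_nonneg (hp0 : ∀ ω, 0 ≤ p ω) (hp1 : ∑ ω : Ω, p ω = 1) (X : Ω → α) :
    0 ≤ ent p X := by
  rw [ent, neg_nonneg]
  apply Finset.sum_nonpos
  intro x _
  apply mul_nonpos_of_nonneg_of_nonpos (pr_nonneg hp0 X x)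
  apply Real.logb_nonpos one_lt_two (pr_nonneg hp0 X x) (pr_le_one hp0 hp1 X x)

lemma ent_const (hp1 : ∑ ω : Ω, p ω = 1) (c : α) : ent p (fun _ => c) = 0 := by
  cases isEmpty_or_nonempty Ω
  · simp [ent, Finset.univ_eq_empty]
  · have : (Finset.univ.image (fun _ : Ω => c)) = {c} := by
      exact Finset.image_const Finset.univ_nonempty c
    rw [ent, this]
    simp [pr, hp1]
end Base

section Submod
open Finset Real
variable {Ω : Type*} [Fintype Ω] {α β γ : Type*} [DecidableEq α] [DecidableEq β] [DecidableEq γ]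
variable {p : Ω → ℝ}

lemma sum_pr_pair_le_fst (hp0 : ∀ ω, 0 ≤ p ω) (X : Ω → α) (Y : Ω → β) (y : β) (T : Finset α) :
    ∑ x ∈ T, pr p (fun ω => (X ω, Y ω)) (x, y) ≤ pr p Y y := by
  have h1 : ∑ x ∈ T, pr p (fun ω => (X ω, Y ω)) (x, y)
      = ∑ ω ∈ Finset.univ.filter (fun ω => X ω ∈ T ∧ Y ω = y), p ω := by
    rw [← Finset.sum_fiberwise_of_maps_to (g := X) (t := T)
      (fun ω hω => (Finset.mem_filter.mp hω).2.1) p]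
    apply Finset.sum_congr rfl
    intro x hx
    apply Finset.sum_congr _ (fun _ _ => rfl)
    ext ω
    simp only [Finset.mem_filter, Finset.mem_univ, true_and, Prod.mk.injEq]
    constructor
    · rintro ⟨h1, h2⟩
      subst h1; subst h2; exact ⟨⟨hx, rfl⟩, rfl⟩
    · rintro ⟨⟨h1, h2⟩, h3⟩
      exact ⟨h3, h2⟩
  rw [h1, pr]
  apply Finset.sum_le_sum_of_subset_of_nonneg _ (fun ω _ _ => hp0 ω)
  intro ω hω
  simp only [Finset.mem_filter, Finset.mem_univ, true_and] at *
  exact hω.2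

lemma sum_pr_pair_le_snd (hp0 : ∀ ω, 0 ≤ p ω) (X : Ω → α) (Y : Ω → β) (x : α) (T : Finset β) :
    ∑ y ∈ T, pr p (fun ω => (X ω, Y ω)) (x, y) ≤ pr p X x := by
  have key := sum_pr_pair_le_fst hp0 Y X x T
  have : ∀ y, pr p (fun ω => (X ω, Y ω)) (x, y) = pr p (fun ω => (Y ω, X ω)) (y, x) := by
    intro y
    apply Finset.sum_congr _ (fun _ _ => rfl)
    ext ω
    simp only [Finset.mem_filter, Prod.mk.injEq]
    tauto
  rw [Finset.sum_congr rfl (fun y _ => this y)]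
  exact key

/-- The key mass inequality behind submodularity. -/
lemma sum_ratio_le_one (hp0 : ∀ ω, 0 ≤ p ω) (hp1 : ∑ ω : Ω, p ω = 1)
    (X : Ω → α) (Y : Ω → β) (Z : Ω → γ) :
    ∑ ω : Ω, p ω *
      (pr p (fun ω => (X ω, Y ω)) (X ω, Y ω) * pr p (fun ω => (Y ω, Z ω)) (Y ω, Z ω) /
        (pr p (fun ω => (X ω, Y ω, Z ω)) (X ω, Y ω, Z ω) * pr p Y (Y ω))) ≤ 1 := by
  set W : Ω → α × β × γ := fun ω => (X ω, Y ω, Z ω) with hW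
  set F : α × β × γ → ℝ := fun v =>
    pr p (fun ω => (X ω, Y ω)) (v.1, v.2.1) * pr p (fun ω => (Y ω, Z ω)) (v.2.1, v.2.2) /
      (pr p W v * pr p Y v.2.1) with hF
  have hgrp : ∑ ω : Ω, p ω *
      (pr p (fun ω => (X ω, Y ω)) (X ω, Y ω) * pr p (fun ω => (Y ω, Z ω)) (Y ω, Z ω) /
        (pr p W (W ω) * pr p Y (Y ω)))
      = ∑ v ∈ Finset.univ.image W, pr p W v * F v := by
    rw [sum_pr_mul W F]
  rw [hgrp]
  -- drop the pr p W factor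
  have hstep : ∀ v ∈ Finset.univ.image W, pr p W v * F v ≤
      pr p (fun ω => (X ω, Y ω)) (v.1, v.2.1) * pr p (fun ω => (Y ω, Z ω)) (v.2.1, v.2.2) /
        pr p Y v.2.1 := by
    intro v _
    rcases eq_or_lt_of_le (pr_nonneg hp0 W v) with h0 | h0
    · rw [← h0, zero_mul]
      exact div_nonneg (mul_nonneg (pr_nonneg hp0 _ _) (pr_nonneg hp0 _ _)) (pr_nonneg hp0 _ _)
    · rw [hF]
      simp only
      rw [← mul_div_assoc, mul_div_mul_left _ _ (ne_of_gt h0)]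
  refine le_trans (Finset.sum_le_sum hstep) ?_
  -- now group by the middle coordinate
  have hmaps : ∀ v ∈ Finset.univ.image W, v.2.1 ∈ Finset.univ.image Y := by
    intro v hv
    rcases Finset.mem_image.mp hv with ⟨ω, _, rfl⟩
    exact Finset.mem_image_of_mem Y (Finset.mem_univ ω)
  rw [← Finset.sum_fiberwise_of_maps_to hmaps]
  have htot : ∑ y ∈ Finset.univ.image Y, pr p Y y = 1 := by rw [sum_pr]; exact hp1
  rw [← htot]
  apply Finset.sum_le_sum
  intro y _
  -- inner sum over v with v.2.1 = y
  set s := (Finset.univ.image W).filter (fun v => v.2.1 = y) with hs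
  have hrw : ∑ v ∈ s, (pr p (fun ω => (X ω, Y ω)) (v.1, v.2.1) *
        pr p (fun ω => (Y ω, Z ω)) (v.2.1, v.2.2) / pr p Y v.2.1)
      = ∑ v ∈ s, (pr p (fun ω => (X ω, Y ω)) (v.1, y) *
        pr p (fun ω => (Y ω, Z ω)) (y, v.2.2) / pr p Y y) := by
    apply Finset.sum_congr rfl
    intro v hv
    rw [hs, Finset.mem_filter] at hv
    rw [hv.2]
  rw [hrw]
  rcases eq_or_lt_of_le (pr_nonneg hp0 Y y) with h0 | h0
  · rw [← h0]
    simp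
  · rw [← Finset.sum_div, div_le_iff₀ h0]
    -- now ∑ v ∈ s, a (v.1) * b (v.2.2) ≤ pr Y y * pr Y y
    have hinj : Set.InjOn (fun v : α × β × γ => (v.1, v.2.2)) s := by
      intro v hv w hw hvw
      simp only [hs, Finset.coe_filter, Set.mem_setOf_eq] at hv hw
      simp only [Prod.mk.injEq] at hvw
      exact Prod.ext hvw.1 (Prod.ext (hv.2.trans hw.2.symm) hvw.2)
    rw [← Finset.sum_image (f := fun w : α × γ => pr p (fun ω => (X ω, Y ω)) (w.1, y) *
        pr p (fun ω => (Y ω, Z ω)) (y, w.2)) (fun v hv w hw h => hinj hv hw h)]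
    have hsubset : s.image (fun v : α × β × γ => (v.1, v.2.2)) ⊆
        (s.image (fun v => v.1)) ×ˢ (s.image (fun v => v.2.2)) := by
      intro w hw
      rcases Finset.mem_image.mp hw with ⟨v, hv, rfl⟩
      exact Finset.mem_product.mpr ⟨Finset.mem_image_of_mem _ hv, Finset.mem_image_of_mem _ hv⟩
    refine le_trans (Finset.sum_le_sum_of_subset_of_nonneg hsubset ?_) ?_
    · intro w _ _
      exact mul_nonneg (pr_nonneg hp0 _ _) (pr_nonneg hp0 _ _)
    · rw [Finset.sum_product]
      rw [show ∑ x ∈ s.image (fun v => v.1), ∑ z ∈ s.image (fun v => v.2.2),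
          pr p (fun ω => (X ω, Y ω)) (x, y) * pr p (fun ω => (Y ω, Z ω)) (y, z)
        = (∑ x ∈ s.image (fun v => v.1), pr p (fun ω => (X ω, Y ω)) (x, y)) *
          (∑ z ∈ s.image (fun v => v.2.2), pr p (fun ω => (Y ω, Z ω)) (y, z)) by
          rw [Finset.sum_mul_sum]]
      apply mul_le_mul (sum_pr_pair_le_fst hp0 X Y y _) (sum_pr_pair_le_snd hp0 Y Z y _)
        (Finset.sum_nonneg fun _ _ => pr_nonneg hp0 _ _) (le_of_lt h0)

end Submod

section Submod2
open Finset Real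
variable {Ω : Type*} [Fintype Ω] {α β γ : Type*} [DecidableEq α] [DecidableEq β] [DecidableEq γ]
variable {p : Ω → ℝ}

lemma ent_submod (hp0 : ∀ ω, 0 ≤ p ω) (hp1 : ∑ ω : Ω, p ω = 1)
    (X : Ω → α) (Y : Ω → β) (Z : Ω → γ) :
    ent p (fun ω => (X ω, Y ω, Z ω)) + ent p Y
      ≤ ent p (fun ω => (X ω, Y ω)) + ent p (fun ω => (Y ω, Z ω)) := by
  set qxy : Ω → ℝ := fun ω => pr p (fun ω => (X ω, Y ω)) (X ω, Y ω) with hqxy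
  set qyz : Ω → ℝ := fun ω => pr p (fun ω => (Y ω, Z ω)) (Y ω, Z ω) with hqyz
  set qxyz : Ω → ℝ := fun ω => pr p (fun ω => (X ω, Y ω, Z ω)) (X ω, Y ω, Z ω) with hqxyz
  set qy : Ω → ℝ := fun ω => pr p Y (Y ω) with hqy
  have key : ∑ ω : Ω, p ω * (logb 2 (qxy ω) + logb 2 (qyz ω)
      - logb 2 (qxyz ω) - logb 2 (qy ω)) ≤ 0 := by
    have hterm : ∀ ω : Ω, p ω * (logb 2 (qxy ω) + logb 2 (qyz ω)
        - logb 2 (qxyz ω) - logb 2 (qy ω))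
        ≤ (p ω * (qxy ω * qyz ω / (qxyz ω * qy ω)) - p ω) / Real.log 2 := by
      intro ω
      rcases eq_or_lt_of_le (hp0 ω) with h0 | h0
      · rw [← h0]; simp
      · have hxy : 0 < qxy ω := lt_of_lt_of_le h0 (le_pr hp0 _ ω)
        have hyz : 0 < qyz ω := lt_of_lt_of_le h0 (le_pr hp0 _ ω)
        have hxyz : 0 < qxyz ω := lt_of_lt_of_le h0 (le_pr hp0 _ ω)
        have hy : 0 < qy ω := lt_of_lt_of_le h0 (le_pr hp0 _ ω)
        set t := qxy ω * qyz ω / (qxyz ω * qy ω) with hts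
        have ht : 0 < t := by positivity
        have hcombo : logb 2 (qxy ω) + logb 2 (qyz ω) - logb 2 (qxyz ω) - logb 2 (qy ω)
            = logb 2 t := by
          rw [hts, Real.logb_div (by positivity) (by positivity), Real.logb_mul (ne_of_gt hxy)
            (ne_of_gt hyz), Real.logb_mul (ne_of_gt hxyz) (ne_of_gt hy)]
          ring
        rw [hcombo, Real.logb, (mul_div_assoc (p ω) (Real.log t) (Real.log 2)).symm,
          div_le_div_iff_of_pos_right (Real.log_pos one_lt_two)]
        nlinarith [Real.log_le_sub_one_of_pos ht, hp0 ω]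
    refine le_trans (Finset.sum_le_sum (fun ω _ => hterm ω)) ?_
    rw [← Finset.sum_div, Finset.sum_sub_distrib, hp1]
    apply div_nonpos_of_nonpos_of_nonneg _ (le_of_lt (Real.log_pos one_lt_two))
    have := sum_ratio_le_one hp0 hp1 X Y Z
    linarith
  rw [ent_eq_sum, ent_eq_sum, ent_eq_sum, ent_eq_sum]
  simp only [mul_add, mul_sub, Finset.sum_add_distrib, Finset.sum_sub_distrib] at key
  show -∑ ω : Ω, p ω * logb 2 (qxyz ω) + -∑ ω : Ω, p ω * logb 2 (qy ω)
      ≤ -∑ ω : Ω, p ω * logb 2 (qxy ω) + -∑ ω : Ω, p ω * logb 2 (qyz ω)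
  linarith
end Submod2

section Derived
open Finset Real
variable {Ω : Type*} [Fintype Ω] {α β γ : Type*} [DecidableEq α] [DecidableEq β] [DecidableEq γ]
variable {p : Ω → ℝ}

lemma ent_pair_le (hp0 : ∀ ω, 0 ≤ p ω) (hp1 : ∑ ω : Ω, p ω = 1) (X : Ω → α) (Z : Ω → γ) :
    ent p (fun ω => (X ω, Z ω)) ≤ ent p X + ent p Z := by
  have h := ent_submod hp0 hp1 X (fun _ => (0 : Fin 1)) Z
  have e0 : ent p (fun _ : Ω => (0 : Fin 1)) = 0 := ent_const hp1 _
  have e1 : ent p (fun ω => (X ω, (0 : Fin 1), Z ω)) = ent p (fun ω => (X ω, Z ω)) :=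
    ent_congr (by intro ω ω'; simp [Prod.ext_iff])
  have e2 : ent p (fun ω => (X ω, (0 : Fin 1))) = ent p X :=
    ent_congr (by intro ω ω'; simp [Prod.ext_iff])
  have e3 : ent p (fun ω => ((0 : Fin 1), Z ω)) = ent p Z :=
    ent_congr (by intro ω ω'; simp [Prod.ext_iff])
  rw [e0, e1, e2, e3] at h
  linarith

lemma ent_indep {L : ℕ} {α : Fin L → Type*} [∀ i, DecidableEq (α i)]
    (hp0 : ∀ ω, 0 ≤ p ω) (A : ∀ i, Ω → α i)
    (hindep : ∀ x : ∀ i, α i,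
      pr p (fun ω => fun i => A i ω) x = ∏ i : Fin L, pr p (A i) (x i)) :
    ent p (fun ω => fun i => A i ω) = ∑ i : Fin L, ent p (A i) := by
  rw [ent_eq_sum]
  have hterm : ∀ ω : Ω, p ω * Real.logb 2 (pr p (fun ω => fun i => A i ω) (fun i => A i ω))
      = ∑ i : Fin L, p ω * Real.logb 2 (pr p (A i) (A i ω)) := by
    intro ω
    rcases eq_or_lt_of_le (hp0 ω) with h0 | h0
    · rw [← h0]; simp
    · rw [hindep, Real.logb_prod _ _ (fun i _ =>
        ne_of_gt (lt_of_lt_of_le h0 (le_pr hp0 (A i) ω))), Finset.mul_sum]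
  rw [Finset.sum_congr rfl (fun ω _ => hterm ω), Finset.sum_comm, ← Finset.sum_neg_distrib]
  exact Finset.sum_congr rfl (fun i _ => (ent_eq_sum (A i)).symm)

end Derived

section Main
open Finset Real

/-- The subtuple encoding used in the statement. -/
def ASf {Ω : Type*} {L : ℕ} {α : Fin L → Type*} (A : ∀ i : Fin L, Ω → α i)
    (S : Finset (Fin L)) (ω : Ω) : ∀ i : Fin L, Option (α i) :=
  fun i => if i ∈ S then some (A i ω) else none

/-- **Lemma 2 (averaged Han-type inequality).**
If `A_1,…,A_L` are mutually independent and `V` is arbitrary, then for every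
`l ∈ {1,…,L}`:
`(1/C(L,l))·∑_{|S|=l} I(A_S;V) ≤ (l/L)·I(A_1,…,A_L;V)`.
(The subtuple `A_S` is encoded as the function `i ↦ if i ∈ S then some (A_i) else none`.) -/
theorem averaged_han_inequality
    {Ω : Type*} [Fintype Ω] (p : Ω → ℝ)
    (hp0 : ∀ ω, 0 ≤ p ω) (hp1 : ∑ ω : Ω, p ω = 1)
    (L : ℕ) (hL : 0 < L)
    (α : Fin L → Type*) [∀ i, Fintype (α i)] [∀ i, DecidableEq (α i)]
    (A : ∀ i : Fin L, Ω → α i)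
    {β : Type*} [DecidableEq β] (V : Ω → β)
    (hindep : ∀ x : ∀ i, α i,
      pr p (fun ω => fun i => A i ω) x = ∏ i : Fin L, pr p (A i) (x i))
    (l : ℕ) (hl1 : 1 ≤ l) (hl2 : l ≤ L) :
    (1 / (L.choose l : ℝ)) *
        ∑ S ∈ Finset.powersetCard l (Finset.univ : Finset (Fin L)),
          mi p (fun ω => fun i : Fin L => if i ∈ S then some (A i ω) else none) V
      ≤ ((l : ℝ) / (L : ℝ)) * mi p (fun ω => fun i => A i ω) V := by
  classical
  have AS_eq : ∀ (S : Finset (Fin L)) (ω ω' : Ω),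
      ASf A S ω' = ASf A S ω ↔ ∀ i ∈ S, A i ω' = A i ω := by
    intro S ω ω'
    constructor
    · intro h i hi
      have := congrFun h i
      simpa [ASf, hi] using this
    · intro h
      funext i
      by_cases hi : i ∈ S
      · simp [ASf, hi, h i hi]
      · simp [ASf, hi]
  set hfn : Finset (Fin L) → ℝ := fun S =>
    ent p (fun ω => (ASf A S ω, V ω)) - ent p V with hhfn
  set efn : Finset (Fin L) → ℝ := fun S => ent p (ASf A S) with hefn
  have mi_eq : ∀ S : Finset (Fin L), mi p (ASf A S) V = efn S - hfn S := by
    intro S; simp only [mi, hhfn, hefn]; ring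
  have h_empty : hfn ∅ = 0 := by
    have h0 : ent p (fun ω => (ASf A (∅ : Finset (Fin L)) ω, V ω)) = ent p V := by
      apply ent_congr
      intro ω ω'
      simp [Prod.ext_iff, AS_eq]
    simp [hhfn, h0]
  have h_submod : ∀ S T : Finset (Fin L), hfn (S ∪ T) + hfn (S ∩ T) ≤ hfn S + hfn T := by
    intro S T
    have key := ent_submod hp0 hp1 (ASf A (S \ T))
      (fun ω => (ASf A (S ∩ T) ω, V ω)) (ASf A (T \ S))
    have c1 : ent p (fun ω => (ASf A (S \ T) ω, (ASf A (S ∩ T) ω, V ω), ASf A (T \ S) ω))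
        = ent p (fun ω => (ASf A (S ∪ T) ω, V ω)) := by
      apply ent_congr
      intro ω ω'
      simp only [Prod.ext_iff, AS_eq]
      constructor
      · rintro ⟨h1, ⟨h2, hv⟩, h3⟩
        refine ⟨fun i hi => ?_, hv⟩
        rcases Finset.mem_union.mp hi with hiS | hiT
        · by_cases ht : i ∈ T
          · exact h2 i (Finset.mem_inter.mpr ⟨hiS, ht⟩)
          · exact h1 i (Finset.mem_sdiff.mpr ⟨hiS, ht⟩)
        · by_cases hs : i ∈ S
          · exact h2 i (Finset.mem_inter.mpr ⟨hs, hiT⟩)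
          · exact h3 i (Finset.mem_sdiff.mpr ⟨hiT, hs⟩)
      · rintro ⟨h, hv⟩
        exact ⟨fun i hi => h i (Finset.mem_union_left _ (Finset.mem_sdiff.mp hi).1),
          ⟨fun i hi => h i (Finset.mem_union_left _ (Finset.mem_inter.mp hi).1), hv⟩,
          fun i hi => h i (Finset.mem_union_right _ (Finset.mem_sdiff.mp hi).1)⟩
    have c2 : ent p (fun ω => (ASf A (S \ T) ω, (ASf A (S ∩ T) ω, V ω)))
        = ent p (fun ω => (ASf A S ω, V ω)) := by
      apply ent_congr
      intro ω ω'
      simp only [Prod.ext_iff, AS_eq]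
      constructor
      · rintro ⟨h1, h2, hv⟩
        refine ⟨fun i hi => ?_, hv⟩
        by_cases ht : i ∈ T
        · exact h2 i (Finset.mem_inter.mpr ⟨hi, ht⟩)
        · exact h1 i (Finset.mem_sdiff.mpr ⟨hi, ht⟩)
      · rintro ⟨h, hv⟩
        exact ⟨fun i hi => h i (Finset.mem_sdiff.mp hi).1,
          fun i hi => h i (Finset.mem_inter.mp hi).1, hv⟩
    have c3 : ent p (fun ω => ((ASf A (S ∩ T) ω, V ω), ASf A (T \ S) ω))
        = ent p (fun ω => (ASf A T ω, V ω)) := by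
      apply ent_congr
      intro ω ω'
      simp only [Prod.ext_iff, AS_eq]
      constructor
      · rintro ⟨⟨h2, hv⟩, h3⟩
        refine ⟨fun i hi => ?_, hv⟩
        by_cases hs : i ∈ S
        · exact h2 i (Finset.mem_inter.mpr ⟨hs, hi⟩)
        · exact h3 i (Finset.mem_sdiff.mpr ⟨hi, hs⟩)
      · rintro ⟨h, hv⟩
        exact ⟨⟨fun i hi => h i (Finset.mem_inter.mp hi).2, hv⟩,
          fun i hi => h i (Finset.mem_sdiff.mp hi).1⟩
    rw [c1, c2, c3] at key
    simp only [hhfn]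
    linarith
  -- local Han step
  have hlocal : ∀ T : Finset (Fin L),
      ((T.card : ℝ) - 1) * hfn T ≤ ∑ i ∈ T, hfn (T.erase i) := by
    intro T
    induction T using Finset.induction_on with
    | empty => simp [h_empty]
    | insert _ _ hj =>
      rename_i j S ih
      have hterm : ∀ i ∈ S, hfn (insert j S) + hfn (S.erase i) - hfn S
          ≤ hfn ((insert j S).erase i) := by
        intro i hi
        have hij : i ≠ j := fun h => hj (h ▸ hi)
        have hu : (insert j S).erase i ∪ S = insert j S := by
          ext x
          simp only [Finset.mem_union, Finset.mem_erase, Finset.mem_insert]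
          constructor
          · rintro (⟨_, hx⟩ | hx)
            · exact hx
            · exact Or.inr hx
          · rintro (rfl | hx)
            · exact Or.inl ⟨hij.symm, Or.inl rfl⟩
            · exact Or.inr hx
        have hi2 : (insert j S).erase i ∩ S = S.erase i := by
          ext x
          simp only [Finset.mem_inter, Finset.mem_erase, Finset.mem_insert]
          constructor
          · rintro ⟨⟨hxi, _⟩, hx⟩
            exact ⟨hxi, hx⟩
          · rintro ⟨hxi, hx⟩
            exact ⟨⟨hxi, Or.inr hx⟩, hx⟩
        have hsm := h_submod ((insert j S).erase i) S
        rw [hu, hi2] at hsm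
        linarith
      have hsum : ∑ i ∈ S, (hfn (insert j S) + hfn (S.erase i) - hfn S)
          ≤ ∑ i ∈ S, hfn ((insert j S).erase i) := Finset.sum_le_sum hterm
      rw [Finset.sum_sub_distrib, Finset.sum_add_distrib, Finset.sum_const,
        Finset.sum_const, nsmul_eq_mul, nsmul_eq_mul] at hsum
      rw [Finset.sum_insert hj, Finset.erase_insert hj, Finset.card_insert_of_notMem hj]
      push_cast
      linarith
  -- double counting
  have hdouble : ∀ k : ℕ,
      ∑ T ∈ Finset.powersetCard (k+1) (Finset.univ : Finset (Fin L)), ∑ i ∈ T, hfn (T.erase i)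
      = ∑ S ∈ Finset.powersetCard k (Finset.univ : Finset (Fin L)), ((L - k : ℕ) : ℝ) * hfn S := by
    intro k
    have hrhs : ∑ S ∈ Finset.powersetCard k (Finset.univ : Finset (Fin L)), ((L - k : ℕ) : ℝ) * hfn S
        = ∑ S ∈ Finset.powersetCard k (Finset.univ : Finset (Fin L)), ∑ _j ∈ Sᶜ, hfn S := by
      apply Finset.sum_congr rfl
      intro S hS
      rw [Finset.sum_const, nsmul_eq_mul, Finset.card_compl,
        (Finset.mem_powersetCard.mp hS).2, Fintype.card_fin]
    rw [hrhs, Finset.sum_sigma', Finset.sum_sigma']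
    apply Finset.sum_nbij'
      (i := fun x : Σ _T : Finset (Fin L), Fin L =>
        (⟨x.1.erase x.2, x.2⟩ : Σ _S : Finset (Fin L), Fin L))
      (j := fun x : Σ _S : Finset (Fin L), Fin L =>
        (⟨insert x.2 x.1, x.2⟩ : Σ _T : Finset (Fin L), Fin L))
    · rintro ⟨T, i⟩ hx
      simp only [Finset.mem_sigma, Finset.mem_powersetCard] at hx ⊢
      refine ⟨⟨Finset.subset_univ _, ?_⟩, ?_⟩
      · rw [Finset.card_erase_of_mem hx.2, hx.1.2]
        omega
      · simp
    · rintro ⟨S, j⟩ hx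
      simp only [Finset.mem_sigma, Finset.mem_powersetCard, Finset.mem_compl] at hx ⊢
      exact ⟨⟨Finset.subset_univ _, by rw [Finset.card_insert_of_notMem hx.2, hx.1.2]⟩,
        Finset.mem_insert_self _ _⟩
    · rintro ⟨T, i⟩ hx
      simp only [Finset.mem_sigma, Finset.mem_powersetCard] at hx
      simp [Finset.insert_erase hx.2]
    · rintro ⟨S, j⟩ hx
      simp only [Finset.mem_sigma, Finset.mem_powersetCard, Finset.mem_compl] at hx
      simp [Finset.erase_insert hx.2]
    · rintro ⟨T, i⟩ _
      rfl
  -- chain step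
  have hM : ∀ k : ℕ, (k : ℝ) *
      ∑ T ∈ Finset.powersetCard (k+1) (Finset.univ : Finset (Fin L)), hfn T
      ≤ ((L - k : ℕ) : ℝ) *
      ∑ S ∈ Finset.powersetCard k (Finset.univ : Finset (Fin L)), hfn S := by
    intro k
    rw [Finset.mul_sum, Finset.mul_sum, ← hdouble k]
    apply Finset.sum_le_sum
    intro T hT
    have hcard : T.card = k + 1 := (Finset.mem_powersetCard.mp hT).2
    have hl := hlocal T
    rw [hcard] at hl
    push_cast at hl
    rw [show (k : ℝ) = (k : ℝ) + 1 - 1 by ring]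
    exact hl
  -- telescoping
  have hchain : ∀ k : ℕ, l ≤ k → k ≤ L →
      (∑ S ∈ Finset.powersetCard k (Finset.univ : Finset (Fin L)), hfn S) * ((l : ℝ) * (L.choose l))
      ≤ (∑ S ∈ Finset.powersetCard l (Finset.univ : Finset (Fin L)), hfn S)
          * ((k : ℝ) * (L.choose k)) := by
    intro k hk
    induction k, hk using Nat.le_induction with
    | base => intro _; exact le_refl _
    | succ k hk ih =>
      intro hk1
      have hkL : k ≤ L := le_trans (Nat.le_succ k) hk1
      have ihh := ih hkL
      have step := hM k
      have hid : ((k+1) * (L.choose (k+1)) : ℕ) = (L - k) * (L.choose k) := by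
        rw [mul_comm, Nat.choose_succ_right_eq, mul_comm]
      have hidR : ((k:ℝ)+1) * ((L.choose (k+1) : ℕ) : ℝ)
          = ((L - k : ℕ) : ℝ) * ((L.choose k : ℕ) : ℝ) := by
        exact_mod_cast congrArg (fun n : ℕ => (n : ℝ)) hid
      have hk0 : (0:ℝ) < (k:ℝ) := by
        have : 1 ≤ k := le_trans hl1 hk
        exact_mod_cast this
      have hCl : (0:ℝ) ≤ (l:ℝ) * (L.choose l : ℝ) := by positivity
      have hLk : (0:ℝ) ≤ ((L - k : ℕ) : ℝ) := Nat.cast_nonneg _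
      set Ml := ∑ S ∈ Finset.powersetCard l (Finset.univ : Finset (Fin L)), hfn S
      set Mk := ∑ S ∈ Finset.powersetCard k (Finset.univ : Finset (Fin L)), hfn S
      set Mk1 := ∑ S ∈ Finset.powersetCard (k+1) (Finset.univ : Finset (Fin L)), hfn S
      have h1 : (k:ℝ) * (Mk1 * ((l:ℝ) * (L.choose l)))
          ≤ (k:ℝ) * (Ml * (((k:ℝ)+1) * (L.choose (k+1)))) := by
        calc (k:ℝ) * (Mk1 * ((l:ℝ) * (L.choose l)))
            = ((k:ℝ) * Mk1) * ((l:ℝ) * (L.choose l)) := by ring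
          _ ≤ (((L - k : ℕ) : ℝ) * Mk) * ((l:ℝ) * (L.choose l)) :=
              mul_le_mul_of_nonneg_right step hCl
          _ = ((L - k : ℕ) : ℝ) * (Mk * ((l:ℝ) * (L.choose l))) := by ring
          _ ≤ ((L - k : ℕ) : ℝ) * (Ml * ((k:ℝ) * (L.choose k))) :=
              mul_le_mul_of_nonneg_left ihh hLk
          _ = (k:ℝ) * (Ml * (((L - k : ℕ) : ℝ) * (L.choose k))) := by ring
          _ = (k:ℝ) * (Ml * (((k:ℝ)+1) * (L.choose (k+1)))) := by rw [← hidR]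
      have h2 := le_of_mul_le_mul_left h1 hk0
      push_cast
      exact h2
  -- Han's inequality
  have hHan : hfn Finset.univ * ((l : ℝ) * (L.choose l))
      ≤ (∑ S ∈ Finset.powersetCard l (Finset.univ : Finset (Fin L)), hfn S) * (L : ℝ) := by
    have := hchain L hl2 (le_refl L)
    have hself : Finset.powersetCard L (Finset.univ : Finset (Fin L)) = {Finset.univ} := by
      have h := Finset.powersetCard_self (Finset.univ : Finset (Fin L))
      rwa [Finset.card_univ, Fintype.card_fin] at h
    rw [hself, Finset.sum_singleton, Nat.choose_self] at this
    simpa using this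
  -- subadditivity for efn
  have e_le : ∀ S : Finset (Fin L), efn S ≤ ∑ i ∈ S, ent p (A i) := by
    intro S
    induction S using Finset.induction_on with
    | empty =>
      have h0 : ent p (ASf A (∅ : Finset (Fin L))) = ent p (fun _ : Ω => (0 : Fin 1)) := by
        apply ent_congr
        intro ω ω'
        simp [AS_eq]
      simp [hefn, h0, ent_const hp1]
    | insert _ _ hj =>
      rename_i i S ih
      have hsplit : ent p (ASf A (insert i S)) = ent p (fun ω => (A i ω, ASf A S ω)) := by
        apply ent_congr
        intro ω ω'
        simp only [Prod.ext_iff, AS_eq]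
        rw [Finset.forall_mem_insert]
      calc efn (insert i S) = ent p (fun ω => (A i ω, ASf A S ω)) := hsplit
        _ ≤ ent p (A i) + ent p (ASf A S) := ent_pair_le hp0 hp1 _ _
        _ ≤ ent p (A i) + ∑ j ∈ S, ent p (A j) := by
            have := ih
            simp only [hefn] at this
            linarith
        _ = ∑ j ∈ insert i S, ent p (A j) := by rw [Finset.sum_insert hj]
  -- counting on the e side
  have hcardfilter : ∀ i : Fin L,
      ((Finset.powersetCard l (Finset.univ : Finset (Fin L))).filter (fun S => i ∈ S)).card
      = (L-1).choose (l-1) := by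
    intro i
    have htarget : (Finset.powersetCard (l-1)
        ((Finset.univ : Finset (Fin L)).erase i)).card = (L-1).choose (l-1) := by
      rw [Finset.card_powersetCard, Finset.card_erase_of_mem (Finset.mem_univ i),
        Finset.card_univ, Fintype.card_fin]
    rw [← htarget]
    refine Finset.card_bij' (fun S _ => S.erase i) (fun S' _ => insert i S') ?_ ?_ ?_ ?_
    · intro S hS
      simp only [Finset.mem_filter, Finset.mem_powersetCard] at hS
      simp only [Finset.mem_powersetCard]
      refine ⟨fun x hx => ?_, ?_⟩
      · simp only [Finset.mem_erase] at hx ⊢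
        exact ⟨hx.1, Finset.mem_univ x⟩
      · rw [Finset.card_erase_of_mem hS.2, hS.1.2]
    · intro S' hS'
      simp only [Finset.mem_powersetCard] at hS'
      have hnotmem : i ∉ S' := fun h => by
        have := hS'.1 h
        simp at this
      simp only [Finset.mem_filter, Finset.mem_powersetCard]
      refine ⟨⟨Finset.subset_univ _, ?_⟩, Finset.mem_insert_self _ _⟩
      rw [Finset.card_insert_of_notMem hnotmem, hS'.2]
      omega
    · intro S hS
      simp only [Finset.mem_filter] at hS
      exact Finset.insert_erase hS.2
    · intro S' hS'
      simp only [Finset.mem_powersetCard] at hS'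
      apply Finset.erase_insert
      intro h
      have := hS'.1 h
      simp at this
  have ecount : ∑ S ∈ Finset.powersetCard l (Finset.univ : Finset (Fin L)), ∑ i ∈ S, ent p (A i)
      = (((L-1).choose (l-1) : ℕ) : ℝ) * ∑ i : Fin L, ent p (A i) := by
    have h1 : ∀ S : Finset (Fin L), ∑ i ∈ S, ent p (A i)
        = ∑ i : Fin L, if i ∈ S then ent p (A i) else 0 := by
      intro S
      rw [Finset.sum_ite_mem, Finset.univ_inter]
    rw [Finset.sum_congr rfl (fun S _ => h1 S), Finset.sum_comm, Finset.mul_sum]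
    apply Finset.sum_congr rfl
    intro i _
    rw [← Finset.sum_filter, Finset.sum_const, nsmul_eq_mul, hcardfilter i]
  -- entropy of the full tuple
  have hfull : ent p (fun ω => fun i => A i ω) = ∑ i : Fin L, ent p (A i) :=
    ent_indep hp0 A hindep
  have hfullpair : ent p (fun ω => (ASf A Finset.univ ω, V ω))
      = ent p (fun ω => ((fun i => A i ω), V ω)) := by
    apply ent_congr
    intro ω ω'
    simp only [Prod.ext_iff, AS_eq, funext_iff]
    simp
  have hfulltuple : ent p (ASf A Finset.univ) = ent p (fun ω => fun i => A i ω) := by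
    apply ent_congr
    intro ω ω'
    simp only [AS_eq, funext_iff]
    simp
  -- final assembly
  have hsum_mi : ∑ S ∈ Finset.powersetCard l (Finset.univ : Finset (Fin L)),
        mi p (fun ω => fun i : Fin L => if i ∈ S then some (A i ω) else none) V
      = (∑ S ∈ Finset.powersetCard l (Finset.univ : Finset (Fin L)), efn S)
        - ∑ S ∈ Finset.powersetCard l (Finset.univ : Finset (Fin L)), hfn S := by
    rw [← Finset.sum_sub_distrib]
    exact Finset.sum_congr rfl (fun S _ => mi_eq S)
  rw [hsum_mi]
  set E := ∑ S ∈ Finset.powersetCard l (Finset.univ : Finset (Fin L)), efn S with hE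
  set Ml := ∑ S ∈ Finset.powersetCard l (Finset.univ : Finset (Fin L)), hfn S with hMl
  set Htot := ∑ i : Fin L, ent p (A i) with hHtot
  set hUV := hfn Finset.univ with hhUV
  have f1 : E ≤ (((L-1).choose (l-1) : ℕ) : ℝ) * Htot := by
    rw [hE, ← ecount]
    exact Finset.sum_le_sum (fun S _ => e_le S)
  have hminat : L * (L-1).choose (l-1) = L.choose l * l := by
    have h := Nat.add_one_mul_choose_eq (L-1) (l-1)
    have h2 : L - 1 + 1 = L := by omega
    have h3 : l - 1 + 1 = l := by omega
    rw [h2, h3] at h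
    exact h
  have hid : (L : ℝ) * (((L-1).choose (l-1) : ℕ) : ℝ) = ((l : ℝ) * (L.choose l : ℝ)) := by
    have := congrArg (fun n : ℕ => (n : ℝ)) hminat
    push_cast at this
    linarith
  have hmifull : mi p (fun ω => fun i => A i ω) V = Htot - hUV := by
    rw [mi, hfull, hhUV, hhfn]
    simp only
    rw [hfullpair]
    ring
  rw [hmifull]
  have hCpos : (0:ℝ) < (L.choose l : ℝ) := by
    exact_mod_cast Nat.choose_pos hl2
  have hLpos : (0:ℝ) < (L:ℝ) := by exact_mod_cast hL
  rw [one_div_mul_eq_div, div_mul_eq_mul_div, div_le_div_iff₀ hCpos hLpos]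
  -- goal : (E - Ml) * L ≤ l * (Htot - hUV) * C
  have g1 : (L:ℝ) * E ≤ ((l:ℝ) * (L.choose l : ℝ)) * Htot := by
    calc (L:ℝ) * E ≤ (L:ℝ) * ((((L-1).choose (l-1) : ℕ) : ℝ) * Htot) := by
          apply mul_le_mul_of_nonneg_left f1 (le_of_lt hLpos)
      _ = ((L : ℝ) * (((L-1).choose (l-1) : ℕ) : ℝ)) * Htot := by ring
      _ = ((l:ℝ) * (L.choose l : ℝ)) * Htot := by rw [hid]
  have g2 : ((l:ℝ) * (L.choose l : ℝ)) * hUV ≤ (L:ℝ) * Ml := by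
    linarith [hHan]
  nlinarith [g1, g2]
end Main
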